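/- (Moreau–Rockafellar sum rule) Let φ₁, …, φ_m : ℝˢ → (−∞, ∞] be closed (lower semicontinuous) convex extended-real-valued functions, and assume there is a point x₀ ∈ ⋂_{i=1}^m dom φᵢ at which all but possibly one of the functions φ₁, …, φ_m are continuous. Then for every x̄ ∈ ⋂_{i=1}^m dom φᵢ, the subdifferential of the sum equals the sum of subdifferentials: ∂(∑_{i=1}^m φᵢ)(x̄) = ∑_{i=1}^m ∂φᵢ(x̄). -/

import Mathlib

open scoped Pointwise

/-- The epigraph of an extended-real-valued function `f : ℝˢ → (-∞, ∞]`. -/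
def ERealEpigraph {s : ℕ} (f : EuclideanSpace ℝ (Fin s) → EReal) :
    Set (EuclideanSpace ℝ (Fin s) × ℝ) :=
  {p | f p.1 ≤ (p.2 : EReal)}

/-- The subdifferential of an extended-real-valued convex function `f` at `xbar`:
all `v` with `⟨v, x - xbar⟩ ≤ f x - f xbar` for all `x` (inequality in the extended
reals). -/
def ERealSubdiff {s : ℕ} (f : EuclideanSpace ℝ (Fin s) → EReal)
    (xbar : EuclideanSpace ℝ (Fin s)) : Set (EuclideanSpace ℝ (Fin s)) :=
  {v | ∀ x, ((inner ℝ v (x - xbar) : ℝ) : EReal) ≤ f x - f xbar}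

open scoped RealInnerProductSpace


namespace MRAux

/-- `c * z ≠ ⊥` for `0 ≤ c` real, `z ≠ ⊥`. -/
lemma mul_ne_bot_of_nonneg {c : ℝ} (hc : 0 ≤ c) {z : EReal} (hz : z ≠ ⊥) :
    (c : EReal) * z ≠ ⊥ := by
  induction z using EReal.rec with
  | bot => exact absurd rfl hz
  | coe r => rw [← EReal.coe_mul]; exact EReal.coe_ne_bot _
  | top =>
    rcases eq_or_lt_of_le hc with h | h
    · rw [← h]; simp
    · rw [EReal.coe_mul_top_of_pos h]; exact top_ne_bot

lemma add_ne_bot {x y : EReal} (hx : x ≠ ⊥) (hy : y ≠ ⊥) : x + y ≠ ⊥ := by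
  simp [EReal.add_eq_bot_iff, hx, hy]

/-- distributivity of nonneg real coe scalar over sums of non-⊥ ereals -/
lemma coe_mul_add {c : ℝ} (hc : 0 ≤ c) {p q : EReal} (hp : p ≠ ⊥) (hq : q ≠ ⊥) :
    (c : EReal) * (p + q) = (c : EReal) * p + (c : EReal) * q := by
  rcases eq_or_lt_of_le hc with h | h
  · rw [← h]; simp
  · induction p using EReal.rec with
    | bot => exact absurd rfl hp
    | top =>
      rw [EReal.top_add_of_ne_bot hq, EReal.coe_mul_top_of_pos h,
        EReal.top_add_of_ne_bot (mul_ne_bot_of_nonneg hc hq)]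
    | coe r =>
      induction q using EReal.rec with
      | bot => exact absurd rfl hq
      | top =>
        rw [EReal.add_top_of_ne_bot (EReal.coe_ne_bot r), EReal.coe_mul_top_of_pos h,
          EReal.add_top_of_ne_bot (mul_ne_bot_of_nonneg hc (EReal.coe_ne_bot r))]
      | coe r' =>
        rw [← EReal.coe_add, ← EReal.coe_mul, ← EReal.coe_mul, ← EReal.coe_mul, mul_add,
          EReal.coe_add]

end MRAux

namespace MRAux

variable {s : ℕ}

local notation "E" => EuclideanSpace ℝ (Fin s)

/-- analytic convexity for EReal functions -/
def EConv (f : E → EReal) : Prop :=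
  ∀ x y : E, ∀ a b : ℝ, 0 ≤ a → 0 ≤ b → a + b = 1 →
    f (a • x + b • y) ≤ (a : EReal) * f x + (b : EReal) * f y

lemma econv_of_convex {f : E → EReal} (hbot : ∀ x, f x ≠ ⊥)
    (h : Convex ℝ (ERealEpigraph f)) : EConv f := by
  intro x y a b ha hb hab
  rcases eq_or_lt_of_le ha with ha0 | ha0
  · have hb1 : b = 1 := by linarith
    subst hb1; rw [← ha0]; simp
  rcases eq_or_lt_of_le hb with hb0 | hb0
  · have ha1 : a = 1 := by linarith
    subst ha1; rw [← hb0]; simp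
  by_cases hfx : f x = ⊤
  · rw [hfx, EReal.coe_mul_top_of_pos ha0,
      EReal.top_add_of_ne_bot (mul_ne_bot_of_nonneg hb (hbot y))]
    exact le_top
  by_cases hfy : f y = ⊤
  · rw [hfy, EReal.coe_mul_top_of_pos hb0,
      EReal.add_top_of_ne_bot (mul_ne_bot_of_nonneg ha (hbot x))]
    exact le_top
  · obtain ⟨p, hp⟩ : ∃ p : ℝ, f x = (p : EReal) := ⟨(f x).toReal, (EReal.coe_toReal hfx (hbot x)).symm⟩
    obtain ⟨q, hq⟩ : ∃ q : ℝ, f y = (q : EReal) := ⟨(f y).toReal, (EReal.coe_toReal hfy (hbot y)).symm⟩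
    have hx' : (x, p) ∈ ERealEpigraph f := by simp [ERealEpigraph, hp]
    have hy' : (y, q) ∈ ERealEpigraph f := by simp [ERealEpigraph, hq]
    have := h hx' hy' ha hb hab
    simp only [ERealEpigraph, Set.mem_setOf_eq, Prod.smul_mk, Prod.mk_add_mk, smul_eq_mul] at this
    rw [hp, hq, ← EReal.coe_mul, ← EReal.coe_mul, ← EReal.coe_add]
    exact this

lemma econv_add {f g : E → EReal} (hf : EConv f) (hg : EConv g)
    (hfbot : ∀ x, f x ≠ ⊥) (hgbot : ∀ x, g x ≠ ⊥) :
    EConv (fun x => f x + g x) := by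
  intro x y a b ha hb hab
  calc f (a • x + b • y) + g (a • x + b • y)
      ≤ ((a : EReal) * f x + (b : EReal) * f y) + ((a : EReal) * g x + (b : EReal) * g y) :=
        add_le_add (hf x y a b ha hb hab) (hg x y a b ha hb hab)
    _ = ((a : EReal) * f x + (a : EReal) * g x) + ((b : EReal) * f y + (b : EReal) * g y) :=
        add_add_add_comm _ _ _ _
    _ = (a : EReal) * (f x + g x) + (b : EReal) * (f y + g y) := by
        rw [coe_mul_add ha (hfbot x) (hgbot x), coe_mul_add hb (hfbot y) (hgbot y)]

lemma econv_affine (r : ℝ) (u w : E) :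
    EConv (fun x => ((r + ⟪u, x - w⟫ : ℝ) : EReal)) := by
  intro x y a b ha hb hab
  have : r + ⟪u, (a • x + b • y) - w⟫ = a * (r + ⟪u, x - w⟫) + b * (r + ⟪u, y - w⟫) := by
    simp only [inner_sub_right, inner_add_right, real_inner_smul_right]
    linear_combination (inner ℝ u w - r : ℝ) * hab
  dsimp only
  rw [this, EReal.coe_add, EReal.coe_mul, EReal.coe_mul]

end MRAux

namespace MRAux

variable {s m : ℕ}

local notation "E" => EuclideanSpace ℝ (Fin s)

lemma sum_ne_bot {ι : Type*} (S : Finset ι) (φ : ι → EReal)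
    (h : ∀ i ∈ S, φ i ≠ ⊥) : (∑ i ∈ S, φ i) ≠ ⊥ := by
  induction S using Finset.cons_induction with
  | empty => simp
  | cons a S ha ih =>
    rw [Finset.sum_cons]
    exact add_ne_bot (h a (Finset.mem_cons_self a S))
      (ih fun i hi => h i (Finset.mem_cons_of_mem hi))

lemma sum_ne_top {ι : Type*} (S : Finset ι) (φ : ι → EReal)
    (h : ∀ i ∈ S, φ i ≠ ⊤) : (∑ i ∈ S, φ i) ≠ ⊤ := by
  induction S using Finset.cons_induction with
  | empty => simp
  | cons a S ha ih =>
    rw [Finset.sum_cons]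
    exact (EReal.add_lt_top (h a (Finset.mem_cons_self a S))
      (ih fun i hi => h i (Finset.mem_cons_of_mem hi))).ne

lemma econv_zero : EConv (s := s) (fun _ => (0 : EReal)) := by
  intro x y a b ha hb hab
  simp

lemma econv_sum (S : Finset (Fin m)) (φ : Fin m → E → EReal)
    (hbot : ∀ i x, φ i x ≠ ⊥) (h : ∀ i, EConv (φ i)) :
    EConv (fun x => ∑ i ∈ S, φ i x) := by
  induction S using Finset.cons_induction with
  | empty => simpa using econv_zero
  | cons a S ha ih =>
    have := econv_add (h a) ih (hbot a)
      (fun x => sum_ne_bot S (fun i => φ i x) (fun i _ => hbot i x))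
    simp only [Finset.sum_cons]
    exact this

lemma contAt_add {f g : E → EReal} {x₀ : E}
    (hf : ContinuousAt f x₀) (hg : ContinuousAt g x₀)
    (h1 : f x₀ ≠ ⊥) (h2 : g x₀ ≠ ⊥) :
    ContinuousAt (fun x => f x + g x) x₀ := by
  have : ContinuousAt (fun p : EReal × EReal => p.1 + p.2) (f x₀, g x₀) :=
    EReal.continuousAt_add (Or.inr h2) (Or.inl h1)
  exact Filter.Tendsto.comp this (Filter.Tendsto.prodMk_nhds hf hg)

lemma contAt_sum' (S : Finset (Fin m)) (φ : Fin m → E → EReal) {x₀ : E}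
    (hbot : ∀ i x, φ i x ≠ ⊥) (hc : ∀ i ∈ S, ContinuousAt (φ i) x₀) :
    ContinuousAt (fun x => ∑ i ∈ S, φ i x) x₀ := by
  induction S using Finset.cons_induction with
  | empty => simpa using continuousAt_const
  | cons a S ha ih =>
    have := contAt_add (hc a (Finset.mem_cons_self a S))
      (ih fun i hi => hc i (Finset.mem_cons_of_mem hi)) (hbot a x₀)
      (sum_ne_bot S (fun i => φ i x₀) (fun i _ => hbot i x₀))
    simp only [Finset.sum_cons]
    exact this

end MRAux

namespace MRAux

variable {s m : ℕ}

local notation "E" => EuclideanSpace ℝ (Fin s)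

lemma subdiff_zero (xbar : E) :
    ERealSubdiff (fun _ => (0 : EReal)) xbar = 0 := by
  ext v
  simp only [ERealSubdiff, Set.mem_setOf_eq, sub_zero, Set.mem_zero]
  constructor
  · intro h
    have h1 := h (xbar + v)
    simp only [add_sub_cancel_left] at h1
    have h2 : (inner ℝ v v : ℝ) ≤ 0 := by exact_mod_cast h1
    have := real_inner_self_nonneg (x := v)
    have : (inner ℝ v v : ℝ) = 0 := le_antisymm h2 this
    exact inner_self_eq_zero.mp this
  · rintro rfl x
    simp

lemma subdiff_add_subset {f g : E → EReal} (xbar : E)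
    (hf : f xbar ≠ ⊥) (hg : g xbar ≠ ⊥) (hf' : f xbar ≠ ⊤) (hg' : g xbar ≠ ⊤) :
    ERealSubdiff f xbar + ERealSubdiff g xbar ⊆ ERealSubdiff (fun x => f x + g x) xbar := by
  rintro w ⟨v₁, hv₁, v₂, hv₂, rfl⟩
  intro x
  obtain ⟨p, hp⟩ : ∃ p : ℝ, f xbar = (p : EReal) := ⟨_, (EReal.coe_toReal hf' hf).symm⟩
  obtain ⟨q, hq⟩ : ∃ q : ℝ, g xbar = (q : EReal) := ⟨_, (EReal.coe_toReal hg' hg).symm⟩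
  have h1 := hv₁ x
  have h2 := hv₂ x
  rw [hp] at h1; rw [hq] at h2
  have key : ((inner ℝ v₁ (x - xbar) + inner ℝ v₂ (x - xbar) : ℝ) : EReal)
      ≤ (f x - ↑p) + (g x - ↑q) := by
    rw [EReal.coe_add]; exact add_le_add h1 h2
  dsimp only
  rw [inner_add_left, hp, hq]
  calc ((inner ℝ v₁ (x - xbar) + inner ℝ v₂ (x - xbar) : ℝ) : EReal)
      ≤ (f x - ↑p) + (g x - ↑q) := key
    _ = (f x + g x) - ↑(p + q) := by
        rw [sub_eq_add_neg, sub_eq_add_neg, sub_eq_add_neg, add_add_add_comm]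
        congr 1
        exact (EReal.neg_add (x := (p:EReal)) (y := (q:EReal)) (by simp) (by simp)).symm
    _ = (f x + g x) - ((p : EReal) + (q : EReal)) := by rw [EReal.coe_add]

end MRAux

namespace MRAux

variable {s : ℕ}

local notation "E" => EuclideanSpace ℝ (Fin s)

lemma psi_decomp (L : (EuclideanSpace ℝ (Fin s) × ℝ) →L[ℝ] ℝ) (x : E) (t : ℝ) :
    L (x, t) = L (x, 0) + t * L (0, 1) := by
  have h : (x, t) = (x, (0:ℝ)) + t • ((0:E), (1:ℝ)) := by
    simp [Prod.ext_iff]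
  rw [h, map_add, map_smul, smul_eq_mul]

lemma two_fun_subset {f g : E → EReal}
    (hfbot : ∀ x, f x ≠ ⊥) (hgbot : ∀ x, g x ≠ ⊥)
    (hf : EConv f) (hg : EConv g) {x₀ : E} (hfx₀ : f x₀ ≠ ⊤) (hgx₀ : g x₀ ≠ ⊤)
    (hfc : ContinuousAt f x₀) (xbar : E) (hfxb : f xbar ≠ ⊤) (hgxb : g xbar ≠ ⊤) :
    ERealSubdiff (fun x => f x + g x) xbar ⊆ ERealSubdiff f xbar + ERealSubdiff g xbar := by
  intro v hv
  obtain ⟨Fr, hFr⟩ : ∃ p : ℝ, f xbar = (p : EReal) := ⟨_, (EReal.coe_toReal hfxb (hfbot _)).symm⟩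
  obtain ⟨Gr, hGr⟩ : ∃ q : ℝ, g xbar = (q : EReal) := ⟨_, (EReal.coe_toReal hgxb (hgbot _)).symm⟩
  set f' : E → EReal := fun x => f x + ((-Fr - ⟪v, x - xbar⟫ : ℝ) : EReal) with hf'def
  set g' : E → EReal := fun x => g x + ((-Gr : ℝ) : EReal) with hg'def
  have hf'bot : ∀ x, f' x ≠ ⊥ := fun x => add_ne_bot (hfbot x) (EReal.coe_ne_bot _)
  have hg'bot : ∀ x, g' x ≠ ⊥ := fun x => add_ne_bot (hgbot x) (EReal.coe_ne_bot _)
  have hf'xbar : f' xbar = 0 := by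
    rw [hf'def]; dsimp only
    rw [hFr, sub_self, inner_zero_right, sub_zero, ← EReal.coe_add]
    norm_num
  have hg'xbar : g' xbar = 0 := by
    rw [hg'def]; dsimp only
    rw [hGr, ← EReal.coe_add]
    norm_num
  -- nonnegativity of f' + g'
  have h0 : ∀ x, (0 : EReal) ≤ f' x + g' x := by
    intro x
    by_cases hfx : f x = ⊤
    · have : f' x = ⊤ := by
        rw [hf'def]; dsimp only; rw [hfx, EReal.top_add_of_ne_bot (EReal.coe_ne_bot _)]
      rw [this, EReal.top_add_of_ne_bot (hg'bot x)]
      exact le_top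
    by_cases hgx : g x = ⊤
    · have : g' x = ⊤ := by
        rw [hg'def]; dsimp only; rw [hgx, EReal.top_add_of_ne_bot (EReal.coe_ne_bot _)]
      rw [this, EReal.add_top_of_ne_bot (hf'bot x)]
      exact le_top
    obtain ⟨p, hp⟩ : ∃ p : ℝ, f x = (p : EReal) := ⟨_, (EReal.coe_toReal hfx (hfbot _)).symm⟩
    obtain ⟨q, hq⟩ : ∃ q : ℝ, g x = (q : EReal) := ⟨_, (EReal.coe_toReal hgx (hgbot _)).symm⟩
    have h1 := hv x
    dsimp only at h1
    rw [hp, hq, hFr, hGr, ← EReal.coe_add, ← EReal.coe_add, ← EReal.coe_sub,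
      EReal.coe_le_coe_iff] at h1
    rw [hf'def, hg'def]; dsimp only
    rw [hp, hq, ← EReal.coe_add, ← EReal.coe_add, ← EReal.coe_add]
    have : (0:EReal) = ((0:ℝ) : EReal) := rfl
    rw [this, EReal.coe_le_coe_iff]
    linarith
  have hf'x₀top : f' x₀ ≠ ⊤ := by
    rw [hf'def]; dsimp only
    exact (EReal.add_lt_top hfx₀ (EReal.coe_ne_top _)).ne
  obtain ⟨p₀, hp₀⟩ : ∃ p : ℝ, f' x₀ = (p : EReal) :=
    ⟨_, (EReal.coe_toReal hf'x₀top (hf'bot _)).symm⟩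
  -- convexity of f' and g'
  have hf' : EConv f' := by
    have h1 := econv_add hf (econv_affine (-Fr) (-v) xbar) hfbot (fun _ => EReal.coe_ne_bot _)
    have heq : (fun x : E => f x + ((-Fr + ⟪-v, x - xbar⟫ : ℝ) : EReal)) = f' := by
      funext x; rw [hf'def]; dsimp only; congr 2
      rw [inner_neg_left]; ring
    rwa [heq] at h1
  have hg' : EConv g' := by
    have h1 := econv_add hg (econv_affine (-Gr) 0 xbar) hgbot (fun _ => EReal.coe_ne_bot _)
    have heq : (fun x : E => g x + ((-Gr + ⟪(0:E), x - xbar⟫ : ℝ) : EReal)) = g' := by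
      funext x; rw [hg'def]; dsimp only; congr 2
      rw [inner_zero_left]; ring
    rwa [heq] at h1
  -- continuity of f' at x₀
  have hf'c : ContinuousAt f' x₀ := by
    rw [hf'def]
    apply contAt_add hfc _ (hfbot x₀) (EReal.coe_ne_bot _)
    exact (continuous_coe_real_ereal.comp
      (continuous_const.sub
        (continuous_const.inner (continuous_id.sub continuous_const)))).continuousAt
  -- the two convex sets
  set A : Set (E × ℝ) := {p | f' p.1 < (p.2 : EReal)} with hAdef
  set B : Set (E × ℝ) := {p | (p.2 : EReal) ≤ -(g' p.1)} with hBdef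
  have hmemA : ∀ x : E, ∀ t : ℝ, f' x < (t : EReal) → (x, t) ∈ A := fun x t h => h
  have hA : Convex ℝ A := by
    rintro ⟨x, t1⟩ hx ⟨y, t2⟩ hy a b ha hb hab
    rcases eq_or_lt_of_le ha with ha0 | ha0
    · have hb1 : b = 1 := by linarith
      subst hb1; rw [← ha0]
      simpa using hy
    rcases eq_or_lt_of_le hb with hb0 | hb0
    · have ha1 : a = 1 := by linarith
      subst ha1; rw [← hb0]
      simpa using hx
    have hx' : f' x < (t1 : EReal) := hx
    have hy' : f' y < (t2 : EReal) := hy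
    obtain ⟨p, hp⟩ : ∃ p : ℝ, f' x = (p : EReal) :=
      ⟨_, (EReal.coe_toReal (hx'.ne_top) (hf'bot _)).symm⟩
    obtain ⟨q, hq⟩ : ∃ q : ℝ, f' y = (q : EReal) :=
      ⟨_, (EReal.coe_toReal (hy'.ne_top) (hf'bot _)).symm⟩
    rw [hp, EReal.coe_lt_coe_iff] at hx'
    rw [hq, EReal.coe_lt_coe_iff] at hy'
    show f' (a • x + b • y) < ((a * t1 + b * t2 : ℝ) : EReal)
    calc f' (a • x + b • y) ≤ (a : EReal) * f' x + (b : EReal) * f' y :=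
          hf' x y a b ha hb hab
      _ = ((a * p + b * q : ℝ) : EReal) := by
          rw [hp, hq, ← EReal.coe_mul, ← EReal.coe_mul, ← EReal.coe_add]
      _ < ((a * t1 + b * t2 : ℝ) : EReal) := by
          rw [EReal.coe_lt_coe_iff]
          have := mul_lt_mul_of_pos_left hx' ha0
          have := mul_lt_mul_of_pos_left hy' hb0
          linarith
  have hgrep : ∀ x : E, ∀ t : ℝ, (x, t) ∈ B → ∃ q : ℝ, g' x = (q : ℝ) ∧ t ≤ -q := by
    intro x t h
    have h' : (t : EReal) ≤ -(g' x) := h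
    have hgx : g' x ≠ ⊤ := by
      intro hc
      rw [hc] at h'
      simp at h'
    obtain ⟨q, hq⟩ : ∃ q : ℝ, g' x = (q : EReal) := ⟨_, (EReal.coe_toReal hgx (hg'bot _)).symm⟩
    refine ⟨q, hq, ?_⟩
    rw [hq, ← EReal.coe_neg, EReal.coe_le_coe_iff] at h'
    exact h'
  have hB : Convex ℝ B := by
    rintro ⟨x, t1⟩ hx ⟨y, t2⟩ hy a b ha hb hab
    rcases eq_or_lt_of_le ha with ha0 | ha0
    · have hb1 : b = 1 := by linarith
      subst hb1; rw [← ha0]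
      simpa using hy
    rcases eq_or_lt_of_le hb with hb0 | hb0
    · have ha1 : a = 1 := by linarith
      subst ha1; rw [← hb0]
      simpa using hx
    obtain ⟨p, hp, hp'⟩ := hgrep x t1 hx
    obtain ⟨q, hq, hq'⟩ := hgrep y t2 hy
    show ((a * t1 + b * t2 : ℝ) : EReal) ≤ -(g' (a • x + b • y))
    apply EReal.le_neg_of_le_neg
    calc g' (a • x + b • y) ≤ (a : EReal) * g' x + (b : EReal) * g' y :=
          hg' x y a b ha hb hab
      _ = ((a * p + b * q : ℝ) : EReal) := by
          rw [hp, hq, ← EReal.coe_mul, ← EReal.coe_mul, ← EReal.coe_add]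
      _ ≤ ((-(a * t1 + b * t2) : ℝ) : EReal) := by
          rw [EReal.coe_le_coe_iff]
          have h1 := mul_le_mul_of_nonneg_left hp' ha
          have h2 := mul_le_mul_of_nonneg_left hq' hb
          nlinarith
      _ = -((a * t1 + b * t2 : ℝ) : EReal) := by rw [EReal.coe_neg]
  -- disjointness
  have hdisjAB : ∀ p : E × ℝ, p ∈ A → p ∈ B → False := by
    rintro ⟨x, t⟩ hxA hxB
    obtain ⟨q, hq, hq'⟩ := hgrep x t hxB
    have hxA' : f' x < (t : EReal) := hxA
    have hlow : ((-q : ℝ) : EReal) ≤ f' x := by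
      have h1 := h0 x
      rw [hq] at h1
      have h2 := add_le_add_left h1 ((-q : ℝ) : EReal)
      rw [zero_add, add_assoc, ← EReal.coe_add] at h2
      norm_num at h2
      exact h2
    have : ((-q : ℝ) : EReal) < (t : EReal) := lt_of_le_of_lt hlow hxA'
    rw [EReal.coe_lt_coe_iff] at this
    linarith
  -- interior point of A
  have hint : (x₀, p₀ + 2) ∈ interior A := by
    rw [mem_interior_iff_mem_nhds]
    have hU : f' ⁻¹' (Set.Iio ((p₀ + 1 : ℝ) : EReal)) ∈ nhds x₀ := by
      apply hf'c.preimage_mem_nhds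
      apply isOpen_Iio.mem_nhds
      rw [Set.mem_Iio, hp₀, EReal.coe_lt_coe_iff]
      linarith
    have hprod : (f' ⁻¹' (Set.Iio ((p₀ + 1 : ℝ) : EReal))) ×ˢ Set.Ioi (p₀ + 1) ∈
        nhds (x₀, p₀ + 2) := by
      apply prod_mem_nhds hU
      exact Ioi_mem_nhds (by linarith)
    apply Filter.mem_of_superset hprod
    rintro ⟨x, t⟩ ⟨h1, h2⟩
    have h1' : f' x < ((p₀ + 1 : ℝ) : EReal) := h1
    exact hmemA x t (lt_of_lt_of_le h1' (EReal.coe_le_coe_iff.mpr (le_of_lt h2)))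
  -- separation
  have hdisj : Disjoint (interior A) B :=
    Set.disjoint_left.mpr fun p hp hpB => hdisjAB p (interior_subset hp) hpB
  obtain ⟨L, c, hL1, hL2⟩ :=
    geometric_hahn_banach_open (hA.interior) isOpen_interior hB hdisj
  -- L ≤ c on all of A
  have hA_le : ∀ p ∈ A, L p ≤ c := by
    intro p hp
    have hseg : ∀ t : ℝ, t ∈ Set.Ioo (0:ℝ) 1 →
        L ((1 - t) • p + t • ((x₀ : E), p₀ + 2)) < c := by
      intro t ht
      exact hL1 _ (hA.combo_self_interior_mem_interior hp hint (by linarith [ht.2])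
        ht.1 (by ring))
    have htend : Filter.Tendsto (fun t : ℝ => L ((1 - t) • p + t • ((x₀ : E), p₀ + 2)))
        (nhdsWithin 0 (Set.Ioi 0)) (nhds (L p)) := by
      have hcont : Continuous (fun t : ℝ => L ((1 - t) • p + t • ((x₀ : E), p₀ + 2))) := by
        apply L.continuous.comp
        fun_prop
      have := hcont.continuousAt (x := (0:ℝ))
      have h00 : L ((1 - (0:ℝ)) • p + (0:ℝ) • ((x₀ : E), p₀ + 2)) = L p := by norm_num
      rw [ContinuousAt, h00] at this
      exact this.mono_left nhdsWithin_le_nhds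
    apply le_of_tendsto htend
    filter_upwards [Ioo_mem_nhdsGT_of_mem (Set.mem_Ico.mpr ⟨le_refl 0, zero_lt_one⟩)] with t ht
    exact (hseg t ht).le
  set ψ : E → ℝ := fun x => L (x, 0) with hψdef
  set α : ℝ := L (0, 1) with hαdef
  have hAineq : ∀ x : E, ∀ t : ℝ, f' x < (t : EReal) → ψ x + t * α ≤ c := by
    intro x t h
    have := hA_le (x, t) (hmemA x t h)
    rwa [psi_decomp] at this
  have hBineq : ∀ x : E, ∀ t : ℝ, (t : EReal) ≤ -(g' x) → c ≤ ψ x + t * α := by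
    intro x t h
    have := hL2 (x, t) h
    rwa [psi_decomp] at this
  -- α < 0
  have hα0 : α ≤ 0 := by
    by_contra hpos
    push_neg at hpos
    set t : ℝ := max 1 ((c - ψ xbar + 1) / α) with htdef
    have ht0 : (0:ℝ) < t := lt_of_lt_of_le one_pos (le_max_left _ _)
    have h1 : ψ xbar + t * α ≤ c := by
      apply hAineq xbar t
      rw [hf'xbar]
      exact_mod_cast ht0
    have h2 : (c - ψ xbar + 1) / α ≤ t := le_max_right _ _
    have h3 : c - ψ xbar + 1 ≤ t * α := by
      rw [div_le_iff₀ hpos] at h2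
      linarith
    linarith
  have hαneg : α < 0 := by
    rcases lt_or_eq_of_le hα0 with h | h
    · exact h
    · exfalso
      have h1 : ψ x₀ + (p₀ + 2) * α < c := by
        have := hL1 _ hint
        rwa [psi_decomp] at this
      obtain ⟨q₀, hq₀⟩ : ∃ q : ℝ, g' x₀ = (q : EReal) := by
        refine ⟨_, (EReal.coe_toReal ?_ (hg'bot _)).symm⟩
        rw [hg'def]; dsimp only
        exact (EReal.add_lt_top hgx₀ (EReal.coe_ne_top _)).ne
      have h2 : c ≤ ψ x₀ + (-q₀) * α := by
        apply hBineq x₀ (-q₀)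
        rw [hq₀, ← EReal.coe_neg]
      rw [h] at h1 h2
      simp only [mul_zero] at h1 h2
      linarith
  -- c = ψ xbar
  have hcψ : c ≤ ψ xbar := by
    have := hBineq xbar 0 (by rw [hg'xbar]; norm_num)
    simpa using this
  have hψc : ψ xbar ≤ c := by
    apply le_of_forall_pos_le_add
    intro ε hε
    have hεα : (0:ℝ) < ε / (-α) := div_pos hε (neg_pos.mpr hαneg)
    have h1 : ψ xbar + (ε / (-α)) * α ≤ c := by
      apply hAineq xbar _
      rw [hf'xbar]
      exact_mod_cast hεα
    have h2 : (ε / (-α)) * α = -ε := by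
      rw [div_mul_eq_mul_div, div_neg, mul_div_assoc, div_self hαneg.ne, mul_one]
    linarith
  have hc : c = ψ xbar := le_antisymm hcψ hψc
  -- the vector
  set w : E := (InnerProductSpace.toDual ℝ (EuclideanSpace ℝ (Fin s))).symm
    (L.comp (ContinuousLinearMap.inl ℝ (EuclideanSpace ℝ (Fin s)) ℝ)) with hwdef
  have hw : ∀ z : E, ⟪w, z⟫ = ψ z := by
    intro z
    rw [hwdef]
    rw [InnerProductSpace.toDual_symm_apply]
    simp [hψdef]
  have hψsub : ∀ x y : E, ψ (x - y) = ψ x - ψ y := by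
    intro x y
    rw [← hw, ← hw, ← hw, inner_sub_right]
  set u : E := (-α)⁻¹ • w with hudef
  have hinner_u : ∀ z : E, ⟪u, z⟫ = (-α)⁻¹ * ψ z := by
    intro z
    rw [hudef, real_inner_smul_left, hw]
  have hnegα : (0:ℝ) < -α := neg_pos.mpr hαneg
  -- subgradient inequality for f'
  have hu_f : ∀ x : E, ((⟪u, x - xbar⟫ : ℝ) : EReal) ≤ f' x := by
    intro x
    by_cases hx : f' x = ⊤
    · rw [hx]; exact le_top
    obtain ⟨p, hp⟩ : ∃ p : ℝ, f' x = (p : EReal) := ⟨_, (EReal.coe_toReal hx (hf'bot _)).symm⟩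
    have key2 : ψ x + p * α ≤ ψ xbar := by
      apply le_of_forall_pos_le_add
      intro ε hε
      have hεα : (0:ℝ) < ε / (-α) := div_pos hε hnegα
      have h1 : ψ x + (p + ε / (-α)) * α ≤ c := by
        apply hAineq x _
        rw [hp, EReal.coe_lt_coe_iff]
        linarith
      have h2 : (ε / (-α)) * α = -ε := by
        rw [div_mul_eq_mul_div, div_neg, mul_div_assoc, div_self hαneg.ne, mul_one]
      rw [hc] at h1
      nlinarith
    rw [hp, EReal.coe_le_coe_iff, hinner_u, hψsub]
    have h3 : ψ x - ψ xbar ≤ p * (-α) := by nlinarith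
    calc (-α)⁻¹ * (ψ x - ψ xbar) ≤ (-α)⁻¹ * (p * (-α)) :=
          mul_le_mul_of_nonneg_left h3 (inv_nonneg.mpr hnegα.le)
      _ = p := by rw [mul_comm p (-α), ← mul_assoc, inv_mul_cancel₀ hnegα.ne', one_mul]
  -- subgradient inequality for g'
  have hu_g : ∀ x : E, ((⟪-u, x - xbar⟫ : ℝ) : EReal) ≤ g' x := by
    intro x
    by_cases hx : g' x = ⊤
    · rw [hx]; exact le_top
    obtain ⟨q, hq⟩ : ∃ q : ℝ, g' x = (q : EReal) := ⟨_, (EReal.coe_toReal hx (hg'bot _)).symm⟩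
    have h1 : c ≤ ψ x + (-q) * α := by
      apply hBineq x (-q)
      rw [hq, ← EReal.coe_neg]
    rw [hc] at h1
    rw [hq, EReal.coe_le_coe_iff, inner_neg_left, hinner_u, hψsub]
    have h3 : ψ xbar - ψ x ≤ q * (-α) := by nlinarith
    calc -((-α)⁻¹ * (ψ x - ψ xbar)) = (-α)⁻¹ * (ψ xbar - ψ x) := by ring
      _ ≤ (-α)⁻¹ * (q * (-α)) := mul_le_mul_of_nonneg_left h3 (inv_nonneg.mpr hnegα.le)
      _ = q := by rw [mul_comm q (-α), ← mul_assoc, inv_mul_cancel₀ hnegα.ne', one_mul]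
  -- assemble
  have h1 : u + v ∈ ERealSubdiff f xbar := by
    intro x
    have hx := hu_f x
    rw [hf'def] at hx
    dsimp only at hx
    have hx2 := add_le_add_left hx ((⟪v, x - xbar⟫ : ℝ) : EReal)
    rw [← EReal.coe_add, add_assoc, ← EReal.coe_add] at hx2
    have hre : -Fr - ⟪v, x - xbar⟫ + ⟪v, x - xbar⟫ = -Fr := by ring
    rw [hre] at hx2
    have hl : ⟪u, x - xbar⟫ + ⟪v, x - xbar⟫ = ⟪u + v, x - xbar⟫ := (inner_add_left _ _ _).symm
    rw [hl] at hx2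
    have hsub : f x - ((Fr : ℝ) : EReal) = f x + ((-Fr : ℝ) : EReal) := by
      rw [sub_eq_add_neg, ← EReal.coe_neg]
    rw [hFr, hsub]
    exact hx2
  have h2 : -u ∈ ERealSubdiff g xbar := by
    intro x
    have hx := hu_g x
    rw [hg'def] at hx
    dsimp only at hx
    have hsub : g x - ((Gr : ℝ) : EReal) = g x + ((-Gr : ℝ) : EReal) := by
      rw [sub_eq_add_neg, ← EReal.coe_neg]
    rw [hGr, hsub]
    exact hx
  have hveq : v = (u + v) + (-u) := by abel
  rw [hveq]
  exact Set.add_mem_add h1 h2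

end MRAux

namespace MRAux

variable {s m : ℕ}

local notation "E" => EuclideanSpace ℝ (Fin s)

lemma two_fun_eq {f g : E → EReal}
    (hfbot : ∀ x, f x ≠ ⊥) (hgbot : ∀ x, g x ≠ ⊥)
    (hf : EConv f) (hg : EConv g) {x₀ : E} (hfx₀ : f x₀ ≠ ⊤) (hgx₀ : g x₀ ≠ ⊤)
    (hfc : ContinuousAt f x₀) (xbar : E) (hfxb : f xbar ≠ ⊤) (hgxb : g xbar ≠ ⊤) :
    ERealSubdiff (fun x => f x + g x) xbar = ERealSubdiff f xbar + ERealSubdiff g xbar :=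
  le_antisymm (two_fun_subset hfbot hgbot hf hg hfx₀ hgx₀ hfc xbar hfxb hgxb)
    (subdiff_add_subset xbar (hfbot _) (hgbot _) hfxb hgxb)

lemma sum_rule_cont (S : Finset (Fin m)) (φ : Fin m → E → EReal)
    (hbot : ∀ i x, φ i x ≠ ⊥) (hecv : ∀ i, EConv (φ i))
    {x₀ : E} (hx₀ : ∀ i, φ i x₀ ≠ ⊤) (hc : ∀ i ∈ S, ContinuousAt (φ i) x₀)
    (xbar : E) (hxb : ∀ i, φ i xbar ≠ ⊤) :
    ERealSubdiff (fun x => ∑ i ∈ S, φ i x) xbar = ∑ i ∈ S, ERealSubdiff (φ i) xbar := by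
  induction S using Finset.cons_induction with
  | empty => simpa using subdiff_zero xbar
  | cons a S ha ih =>
    have hgbot : ∀ x : E, (∑ i ∈ S, φ i x) ≠ ⊥ :=
      fun x => sum_ne_bot S (fun i => φ i x) (fun i _ => hbot i x)
    have hgtop : ∀ x : E, (∀ i, φ i x ≠ ⊤) → (∑ i ∈ S, φ i x) ≠ ⊤ :=
      fun x h => sum_ne_top S (fun i => φ i x) (fun i _ => h i)
    have key := two_fun_eq (f := φ a) (g := fun x => ∑ i ∈ S, φ i x)
      (hbot a) hgbot (hecv a)
      (econv_sum S φ hbot hecv) (hx₀ a) (hgtop x₀ hx₀)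
      (hc a (Finset.mem_cons_self a S)) xbar (hxb a) (hgtop xbar hxb)
    have ih' := ih (fun i hi => hc i (Finset.mem_cons_of_mem hi))
    have hfe : (fun x : E => ∑ i ∈ Finset.cons a S ha, φ i x)
        = (fun x => φ a x + (fun x => ∑ i ∈ S, φ i x) x) := by
      funext x; rw [Finset.sum_cons]
    rw [Finset.sum_cons, ← ih', ← key, hfe]

end MRAux

theorem moreau_rockafellar_sum_rule' {s m : ℕ}
    (φ : Fin m → EuclideanSpace ℝ (Fin s) → EReal)
    (hbot : ∀ i x, φ i x ≠ ⊥)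
    (hconvex : ∀ i, Convex ℝ (ERealEpigraph (φ i)))
    (x₀ : EuclideanSpace ℝ (Fin s)) (hx₀ : ∀ i, φ i x₀ < ⊤)
    (i₀ : Fin m) (hcont : ∀ i, i ≠ i₀ → ContinuousAt (φ i) x₀)
    (xbar : EuclideanSpace ℝ (Fin s)) (hxbar : ∀ i, φ i xbar < ⊤) :
    ERealSubdiff (fun x => ∑ i, φ i x) xbar = ∑ i, ERealSubdiff (φ i) xbar := by
  classical
  have hecv : ∀ i, MRAux.EConv (φ i) := fun i => MRAux.econv_of_convex (hbot i) (hconvex i)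
  set T : Finset (Fin m) := Finset.univ.erase i₀ with hT
  have hgbot : ∀ x, (∑ i ∈ T, φ i x) ≠ ⊥ :=
    fun x => MRAux.sum_ne_bot T (fun i => φ i x) (fun i _ => hbot i x)
  have hgtop : ∀ x, (∀ i, φ i x ≠ ⊤) → (∑ i ∈ T, φ i x) ≠ ⊤ :=
    fun x h => MRAux.sum_ne_top T (fun i => φ i x) (fun i _ => h i)
  have hgc : ContinuousAt (fun x => ∑ i ∈ T, φ i x) x₀ :=
    MRAux.contAt_sum' T φ hbot (fun i hi => hcont i (Finset.ne_of_mem_erase hi))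
  have key := MRAux.two_fun_eq (f := fun x => ∑ i ∈ T, φ i x) (g := φ i₀)
    hgbot (hbot i₀)
    (MRAux.econv_sum T φ hbot hecv) (hecv i₀)
    (hgtop x₀ (fun i => (hx₀ i).ne)) (hx₀ i₀).ne hgc xbar
    (hgtop xbar (fun i => (hxbar i).ne)) (hxbar i₀).ne
  have hsum := MRAux.sum_rule_cont T φ hbot hecv (fun i => (hx₀ i).ne)
    (fun i hi => hcont i (Finset.ne_of_mem_erase hi)) xbar (fun i => (hxbar i).ne)
  have hfun : (fun x => ∑ i, φ i x) = (fun x => (∑ i ∈ T, φ i x) + φ i₀ x) := by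
    funext x
    rw [hT, Finset.sum_erase_add _ _ (Finset.mem_univ i₀)]
  rw [hfun, key, hsum, hT, Finset.sum_erase_add _ _ (Finset.mem_univ i₀)]


/-- Moreau–Rockafellar sum rule: if `φ₁, …, φ_m : ℝˢ → (-∞, ∞]` are closed convex
functions and there is `x₀` in the intersection of their domains at which all but
possibly one of them are continuous, then for every `xbar` in the intersection of
the domains, `∂(∑ i, φᵢ)(xbar) = ∑ i, ∂φᵢ(xbar)` (Minkowski sum). -/
theorem moreau_rockafellar_sum_rule {s m : ℕ}
    (φ : Fin m → EuclideanSpace ℝ (Fin s) → EReal)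
    (hbot : ∀ i x, φ i x ≠ ⊥)
    (hclosed : ∀ i, IsClosed (ERealEpigraph (φ i)))
    (hconvex : ∀ i, Convex ℝ (ERealEpigraph (φ i)))
    (x₀ : EuclideanSpace ℝ (Fin s)) (hx₀ : ∀ i, φ i x₀ < ⊤)
    (i₀ : Fin m) (hcont : ∀ i, i ≠ i₀ → ContinuousAt (φ i) x₀)
    (xbar : EuclideanSpace ℝ (Fin s)) (hxbar : ∀ i, φ i xbar < ⊤) :
    ERealSubdiff (fun x => ∑ i, φ i x) xbar = ∑ i, ERealSubdiff (φ i) xbar :=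
  moreau_rockafellar_sum_rule' φ hbot hconvex x₀ hx₀ i₀ hcont xbar hxbar
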